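/- Fix assortments S, S' ⊆ [N] with d(S,S') = r ≥ 1, and let T₁,...,T_M be M independent uniformly distributed random subsets of [N] (assortments drawn with replacement). Then the probability that no draw T_m is a dominator of S' relative to S (i.e., that no T_m satisfies T_m ≠ S and S ⊖ T_m ⊊ S ⊖ S') equals (1 − (2^r − 2)/2^N)^M. -/
import Mathlib

lemma pi_filter_card {α : Type*} [Fintype α] [DecidableEq α] (M : ℕ)
    (P : α → Prop) [DecidablePred P] :
    ((Finset.univ : Finset (Fin M → α)).filter (fun T => ∀ m, P (T m))).card
      = (Finset.univ.filter P).card ^ M := by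
  have : (Finset.univ : Finset (Fin M → α)).filter (fun T => ∀ m, P (T m))
      = Fintype.piFinset (fun _ : Fin M => Finset.univ.filter P) := by
    ext T
    simp [Fintype.mem_piFinset]
  rw [this, Fintype.card_piFinset]
  simp

/-- Fix assortments `S, S' ⊆ [N]` with `d(S,S') = r ≥ 1`, and draw `M` assortments
`T 0, …, T (M-1)` independently and uniformly at random from all subsets of `[N]`
(drawing with replacement, i.e., the tuple `T` is uniform over `(2^[N])^M`).  The probability
that no draw `T m` is a dominator of `S'` relative to `S` (i.e., no `T m` satisfies
`T m ≠ S` and `S ⊖ T m ⊊ S ⊖ S'`) equals `(1 - (2^r - 2)/2^N)^M`. -/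
theorem prob_no_dominator_drawn (N r M : ℕ) (hr : 1 ≤ r) (S S' : Finset (Fin N))
    (hd : (symmDiff S S').card = r) :
    (((Finset.univ : Finset (Fin M → Finset (Fin N))).filter
        (fun T => ∀ m : Fin M, ¬ (T m ≠ S ∧ symmDiff S (T m) ⊂ symmDiff S S'))).card : ℝ)
      / ((2 ^ N : ℝ) ^ M)
      = (1 - ((2 : ℝ) ^ r - 2) / 2 ^ N) ^ M := by
  set D := symmDiff S S' with hD
  -- count of the bad set
  have hbad : (Finset.univ.filter
      (fun t : Finset (Fin N) => t ≠ S ∧ symmDiff S t ⊂ D)).card = 2 ^ r - 2 := by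
    have hcard : (Finset.univ.filter
        (fun t : Finset (Fin N) => t ≠ S ∧ symmDiff S t ⊂ D)).card
        = ((D.powerset.erase D).erase ∅).card := by
      apply Finset.card_bij (fun t _ => symmDiff S t)
      · intro t ht
        simp only [Finset.mem_filter, Finset.mem_univ, true_and] at ht
        obtain ⟨hne, hsub⟩ := ht
        simp only [Finset.mem_erase, Finset.mem_powerset]
        refine ⟨?_, hsub.ne, hsub.subset⟩
        intro h
        apply hne
        have := symmDiff_eq_bot.mp (by simpa using h : symmDiff S t = ⊥)
        exact this.symm
      · intro a ha b hb h
        have : symmDiff S (symmDiff S a) = symmDiff S (symmDiff S b) := by rw [h]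
        simpa [symmDiff_symmDiff_cancel_left] using this
      · intro A hA
        simp only [Finset.mem_erase, Finset.mem_powerset] at hA
        obtain ⟨hne, hneD, hsub⟩ := hA
        refine ⟨symmDiff S A, ?_, by simp [symmDiff_symmDiff_cancel_left]⟩
        simp only [Finset.mem_filter, Finset.mem_univ, true_and,
          symmDiff_symmDiff_cancel_left]
        constructor
        · intro h
          apply hne
          have := congrArg (symmDiff S) h
          simpa [symmDiff_symmDiff_cancel_left] using this
        · exact Finset.ssubset_iff_subset_ne.mpr ⟨hsub, hneD⟩
    rw [hcard]
    have hDne : D ≠ ∅ := by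
      intro h
      rw [h] at hd
      simp at hd
      omega
    have h1 : ∅ ∈ D.powerset.erase D := by
      simp [Finset.mem_erase, Ne.symm hDne]
    rw [Finset.card_erase_of_mem h1, Finset.card_erase_of_mem (by simp),
      Finset.card_powerset, hd]
    omega
  have hrN : r ≤ N := by
    rw [← hd]
    simpa using Finset.card_le_card (Finset.subset_univ D)
  have h2r : 2 ≤ 2 ^ r := by
    calc 2 = 2 ^ 1 := by norm_num
    _ ≤ 2 ^ r := Nat.pow_le_pow_right (by norm_num) hr
  have h2N : 2 ^ r ≤ 2 ^ N := Nat.pow_le_pow_right (by norm_num) hrN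
  -- count of the good set
  have hgood : (Finset.univ.filter
      (fun t : Finset (Fin N) => ¬ (t ≠ S ∧ symmDiff S t ⊂ D))).card
      = 2 ^ N - (2 ^ r - 2) := by
    rw [Finset.filter_not, Finset.card_sdiff_of_subset (Finset.filter_subset _ _), hbad]
    congr 1
    simp [Finset.card_univ]
  rw [pi_filter_card M (fun t : Finset (Fin N) => ¬ (t ≠ S ∧ symmDiff S t ⊂ D)), hgood]
  rw [Nat.cast_pow, ← div_pow]
  congr 1
  have : ((2 ^ N - (2 ^ r - 2) : ℕ) : ℝ) = 2 ^ N - (2 ^ r - 2) := by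
    push_cast [Nat.cast_sub (le_trans (Nat.sub_le _ _) h2N), Nat.cast_sub h2r]
    ring
  rw [this]
  field_simp
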